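/- For q > 1 real, x > 0, and s complex with Re(s) > 1, the q-Hurwitz zeta function satisfies the expansion ζ_q(s,x) = (q−1)^s · Σ_{k=0}^∞ [s(s+1)⋯(s+k−1)/k!] · q^{(s+k−1)(1−x)}/(q^{s+k−1} − 1), obtained by binomial expansion of (q^{n+x} − 1)^{−s}. -/

import Mathlib

open Filter Finset Topology

-- majorant summability
lemma maj_summable (s : ℂ) {r : ℝ} (h0 : 0 < r) (h1 : r < 1) :
    Summable (fun k : ℕ => ((k:ℝ)+1) * (∏ i ∈ Finset.range k, (‖s‖+1+i)) / (Nat.factorial k) * r^k) := by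
  set f : ℕ → ℝ := fun k => ((k:ℝ)+1) * (∏ i ∈ Finset.range k, (‖s‖+1+i)) / (Nat.factorial k) * r^k with hf
  have hpos : ∀ k, 0 < f k := by
    intro k
    have hP : (0:ℝ) < ∏ i ∈ Finset.range k, (‖s‖+1+i) := Finset.prod_pos (fun i _ => by positivity)
    positivity
  have hratio : Tendsto (fun k : ℕ => ‖f (k+1)‖ / ‖f k‖) atTop (𝓝 r) := by
    have key : ∀ k : ℕ, ‖f (k+1)‖ / ‖f k‖ = (1 + 1/((k:ℝ)+1)) * (1 + ‖s‖*(1/((k:ℝ)+1))) * r := by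
      intro k
      have h1 : (0:ℝ) < (k:ℝ)+1 := by positivity
      rw [Real.norm_of_nonneg (hpos _).le, Real.norm_of_nonneg (hpos _).le, hf]
      simp only
      rw [Finset.prod_range_succ, Nat.factorial_succ]
      push_cast
      have hP : (0:ℝ) < ∏ i ∈ Finset.range k, (‖s‖+1+i) := Finset.prod_pos (fun i _ => by positivity)
      field_simp
      ring
    rw [show (𝓝 r) = 𝓝 ((1+0) * (1+‖s‖*0) * r) by norm_num]
    refine Tendsto.congr (fun k => (key k).symm) ?_
    exact (((tendsto_const_nhds.add tendsto_one_div_add_atTop_nhds_zero_nat).mul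
      (tendsto_const_nhds.add (tendsto_const_nhds.mul tendsto_one_div_add_atTop_nhds_zero_nat))).mul tendsto_const_nhds)
  exact summable_of_ratio_test_tendsto_lt_one h1 (Eventually.of_forall fun k => (hpos k).ne') hratio

lemma coeff_norm_le (s : ℂ) (k : ℕ) :
    ‖(∏ i ∈ Finset.range k, (s + i)) / (Nat.factorial k : ℂ)‖
      ≤ (∏ i ∈ Finset.range k, (‖s‖+1+i)) / (Nat.factorial k) := by
  rw [norm_div]
  have h2 : ‖((Nat.factorial k : ℕ) : ℂ)‖ = (Nat.factorial k : ℝ) := by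
    simp
  rw [h2]
  gcongr with hh
  rw [norm_prod]
  apply Finset.prod_le_prod (fun i _ => norm_nonneg _)
  intro i _
  calc ‖s + (i:ℂ)‖ ≤ ‖s‖ + ‖(i:ℂ)‖ := norm_add_le _ _
    _ ≤ ‖s‖ + 1 + i := by simp

lemma binom (s : ℂ) {u : ℝ} (h0 : 0 ≤ u) (h1 : u < 1) :
    HasSum (fun k : ℕ => (∏ i ∈ Finset.range k, (s + i)) / (Nat.factorial k : ℂ) * (u:ℂ)^k)
      (((1 - u : ℝ) : ℂ) ^ (-s)) := by
  set c : ℕ → ℂ := fun k => (∏ i ∈ Finset.range k, (s + i)) / (Nat.factorial k : ℂ) with hc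
  set Q : ℕ → ℝ := fun k => (∏ i ∈ Finset.range k, (‖s‖+1+i)) / (Nat.factorial k : ℝ) with hQdef
  have hQ0 : ∀ k, 0 ≤ Q k := by
    intro k
    have : (0:ℝ) ≤ ∏ i ∈ Finset.range k, (‖s‖+1+i) :=
      Finset.prod_nonneg (fun i _ => by positivity)
    positivity
  have hcQ : ∀ k, ‖c k‖ ≤ Q k := fun k => coeff_norm_le s k
  set r : ℝ := (1+u)/2 with hrdef
  have hr0 : 0 < r := by rw [hrdef]; linarith
  have hur : u < r := by rw [hrdef]; linarith
  have hr1 : r < 1 := by rw [hrdef]; linarith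
  have hmaj : Summable (fun k : ℕ => ((k:ℝ)+1) * Q k * r^k) := by
    refine (maj_summable s hr0 hr1).congr fun k => ?_
    rw [hQdef]
    ring
  have hsm : ∀ y : ℝ, |y| ≤ r → Summable (fun k => c k * (y:ℂ)^k) := by
    intro y hy
    apply Summable.of_norm
    refine Summable.of_nonneg_of_le (fun k => norm_nonneg _) (fun k => ?_) hmaj
    rw [norm_mul, norm_pow]
    calc ‖c k‖ * ‖(y:ℂ)‖^k ≤ Q k * r^k := by
          apply mul_le_mul (hcQ k) (pow_le_pow_left₀ (norm_nonneg _) (by simpa using hy) k)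
            (by positivity) (hQ0 k)
      _ ≤ ((k:ℝ)+1) * Q k * r^k := by nlinarith [hQ0 k, pow_nonneg hr0.le k, Nat.cast_nonneg (α := ℝ) k, mul_nonneg (hQ0 k) (pow_nonneg hr0.le k)]
  set F : ℝ → ℂ := fun y => ∑' k, c k * (y:ℂ)^k with hF
  set t : Set ℝ := Set.Ioo (-r) r with htdef
  have h0t : (0:ℝ) ∈ t := ⟨by linarith, hr0⟩
  set g' : ℕ → ℝ → ℂ := fun k y => c k * k * (y:ℂ)^(k-1) with hg'
  have hderiv : ∀ (k : ℕ) (y:ℝ), HasDerivAt (fun z : ℝ => c k * (z:ℂ)^k) (g' k y) y := by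
    intro k y
    have h := ((hasDerivAt_pow k ((y:ℂ))).comp_ofReal).const_mul (c k)
    simpa [hg', mul_comm, mul_assoc, mul_left_comm] using h
  set ub : ℕ → ℝ := fun k => ((k:ℝ)+1) * Q k * r^k / r with hub
  have hub_sum : Summable ub := hmaj.div_const r
  have habs : ∀ y : ℝ, y ∈ t → |y| ≤ r := by
    intro y hy
    rw [abs_le]
    exact ⟨hy.1.le, hy.2.le⟩
  have hbound : ∀ (k : ℕ) (y:ℝ), y ∈ t → ‖g' k y‖ ≤ ub k := by
    intro k y hy
    have hyr : |y| ≤ r := habs y hy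
    match k with
    | 0 => simp only [hg', hub]; simp; positivity
    | (k+1) =>
      have hyk : |y|^k ≤ r^k := pow_le_pow_left₀ (abs_nonneg y) hyr k
      have e1 : ‖g' (k+1) y‖ = ‖c (k+1)‖ * ((k:ℝ)+1) * |y|^k := by
        simp only [hg', Nat.add_sub_cancel, norm_mul, norm_pow, Complex.norm_natCast,
          Complex.norm_real, Real.norm_eq_abs]
        push_cast
        ring
      have e2 : ub (k+1) = ((k:ℝ)+1+1) * Q (k+1) * r^k := by
        simp only [hub, Nat.cast_add, Nat.cast_one]
        rw [pow_succ]
        field_simp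
      rw [e1, e2]
      have h3 : ‖c (k+1)‖ * ((k:ℝ)+1) * |y|^k ≤ Q (k+1) * ((k:ℝ)+1) * r^k := by
        apply mul_le_mul (mul_le_mul (hcQ _) le_rfl (by positivity) (hQ0 _)) hyk
          (by positivity) (mul_nonneg (hQ0 _) (by positivity))
      nlinarith [hQ0 (k+1), pow_nonneg hr0.le k, Nat.cast_nonneg (α := ℝ) k,
        mul_nonneg (hQ0 (k+1)) (pow_nonneg hr0.le k)]
  have key : ∀ y ∈ t, HasDerivAt F (∑' k, g' k y) y := by
    intro y hy
    exact hasDerivAt_tsum_of_isPreconnected hub_sum isOpen_Ioo isPreconnected_Ioo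
      (fun k z _ => hderiv k z) (fun k z hz => hbound k z hz) h0t
      (hsm 0 (by simp [hr0.le])) hy
  have hDsm : ∀ y ∈ t, Summable (fun k => g' k y) := by
    intro y hy
    apply Summable.of_norm
    exact Summable.of_nonneg_of_le (fun k => norm_nonneg _) (fun k => hbound k y hy) hub_sum
  have hode : ∀ y ∈ t, (1 - (y:ℂ)) * (∑' k, g' k y) = s * F y := by
    intro y hy
    have hyr := habs y hy
    have hsum1 : Summable (fun k => g' k y) := hDsm y hy
    have e1 : ∀ k : ℕ, g' (k+1) y = s * (c k * (y:ℂ)^k) + (y:ℂ) * g' k y := by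
      intro k
      have hk1 : ((k:ℂ)+1) ≠ 0 := Nat.cast_add_one_ne_zero k
      have hkf : ((Nat.factorial k : ℕ) : ℂ) ≠ 0 :=
        Nat.cast_ne_zero.mpr (Nat.factorial_ne_zero k)
      have hcc : c (k+1) * ((k:ℂ)+1) = c k * (s + k) := by
        rw [hc]
        simp only
        rw [Finset.prod_range_succ, Nat.factorial_succ]
        push_cast
        field_simp
      have hyk : (y:ℂ) * ((y:ℂ)^(k-1) * k) = (y:ℂ)^k * k := by
        cases k with
        | zero => simp
        | succ m => rw [pow_succ]; push_cast; ring
      calc g' (k+1) y = (c (k+1) * ((k:ℂ)+1)) * (y:ℂ)^k := by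
            simp only [hg', Nat.add_sub_cancel]; push_cast; ring
        _ = c k * (s+k) * (y:ℂ)^k := by rw [hcc]
        _ = s * (c k * (y:ℂ)^k) + (y:ℂ) * g' k y := by
            simp only [hg']
            linear_combination (-(c k)) * hyk
    have e0 : ∑' k, g' k y = ∑' k, g' (k+1) y := by
      rw [Summable.tsum_eq_zero_add hsum1]
      simp [hg']
    have e2 : Summable (fun k => s * (c k * (y:ℂ)^k)) := ((hsm y hyr).mul_left s)
    have e3 : Summable (fun k => (y:ℂ) * g' k y) := hsum1.mul_left (y:ℂ)
    have hD : ∑' k, g' k y = s * F y + (y:ℂ) * ∑' k, g' k y := by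
      calc ∑' k, g' k y = ∑' k, g' (k+1) y := e0
        _ = ∑' k, (s * (c k * (y:ℂ)^k) + (y:ℂ) * g' k y) := tsum_congr e1
        _ = (∑' k, s * (c k * (y:ℂ)^k)) + ∑' k, (y:ℂ) * g' k y := Summable.tsum_add e2 e3
        _ = s * F y + (y:ℂ) * ∑' k, g' k y := by rw [tsum_mul_left, tsum_mul_left, hF]
    linear_combination hD
  set G : ℝ → ℂ := fun y => F y * Complex.exp (s * (Real.log (1-y) : ℂ)) with hG
  have hGd : ∀ y ∈ t, HasDerivAt G 0 y := by
    intro y hy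
    have hy1 : y < 1 := lt_trans hy.2 hr1
    have h1y : (0:ℝ) < 1 - y := by linarith
    have hlog : HasDerivAt (fun z:ℝ => Real.log (1-z)) ((1-y)⁻¹ * (-1)) y := by
      exact (Real.hasDerivAt_log h1y.ne').comp y ((hasDerivAt_id y).const_sub 1)
    have hexp : HasDerivAt (fun z:ℝ => Complex.exp (s * (Real.log (1-z):ℂ)))
        (Complex.exp (s * (Real.log (1-y):ℂ)) * (s * (((1-y)⁻¹ * (-1) : ℝ) : ℂ))) y :=
      ((hlog.ofReal_comp).const_mul s).cexp
    have hmul := (key y hy).mul hexp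
    have h1yC : (1:ℂ) - (y:ℂ) ≠ 0 := by
      intro h
      have : ((1 - y : ℝ) : ℂ) = 0 := by push_cast; linear_combination h
      exact h1y.ne' (by exact_mod_cast this)
    have hodey := hode y hy
    rw [hG]
    convert hmul using 1
    · rfl
    · rfl
    have hc1 : (((1-y)⁻¹ * (-1) : ℝ) : ℂ) = -((1:ℂ)-(y:ℂ))⁻¹ := by push_cast; ring
    rw [hc1]
    field_simp
    linear_combination (-(Complex.exp (s * (Real.log (1-y):ℂ)))) * hodey
  have hut : u ∈ t := ⟨by linarith, hur⟩
  have h0u : ∀ z ∈ Set.Icc (0:ℝ) u, z ∈ t := by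
    intro z hz
    exact ⟨by linarith [hz.1], lt_of_le_of_lt hz.2 hur⟩
  have hGconst : G u = G 0 := by
    apply constant_of_has_deriv_right_zero (f := G) (a := 0) (b := u)
    · intro z hz
      exact ((hGd z (h0u z hz)).continuousAt).continuousWithinAt
    · intro z hz
      exact (hGd z (h0u z (Set.mem_Icc_of_Ico hz))).hasDerivWithinAt
    · exact ⟨h0, le_refl u⟩
  have hF0 : F 0 = 1 := by
    rw [hF]
    simp only [Complex.ofReal_zero]
    rw [tsum_eq_single 0 (fun j hj => by simp [zero_pow hj])]
    simp [hc]
  have hG0 : G 0 = 1 := by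
    rw [hG]
    simp [hF0]
  have hfin : F u = ((1-u:ℝ):ℂ)^(-s) := by
    have h1u : (0:ℝ) < 1 - u := by linarith
    have hne : ((1-u:ℝ):ℂ) ≠ 0 := by exact_mod_cast h1u.ne'
    rw [Complex.cpow_def_of_ne_zero hne, ← Complex.ofReal_log h1u.le]
    have hEne : Complex.exp (s * (Real.log (1-u):ℂ)) ≠ 0 := Complex.exp_ne_zero _
    have hGu : F u * Complex.exp (s * (Real.log (1-u):ℂ)) = 1 := by
      rw [← hG0, ← hGconst, hG]
    have heq : Complex.exp ((Real.log (1-u):ℂ) * (-s)) =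
        (Complex.exp (s * (Real.log (1-u):ℂ)))⁻¹ := by
      rw [← Complex.exp_neg]
      ring_nf
    rw [heq, eq_div_of_mul_eq hEne hGu, one_div]
  have hsum : Summable (fun k => c k * (u:ℂ)^k) := hsm u (by rw [abs_of_nonneg h0]; exact hur.le)
  have := hsum.hasSum
  rwa [show ∑' k, c k * (u:ℂ)^k = ((1-u:ℝ):ℂ)^(-s) from hfin] at this

lemma cpow_exp_form {a : ℝ} (ha : 0 < a) (w : ℂ) :
    ((a:ℝ):ℂ) ^ w = Complex.exp ((Real.log a : ℂ) * w) := by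
  rw [Complex.cpow_def_of_ne_zero (by exact_mod_cast ha.ne'), Complex.ofReal_log ha.le]

lemma step1 (q xx : ℝ) (hq : 1 < q) (hxx : 0 < xx) (s : ℂ) :
    ((q ^ xx : ℝ) : ℂ) / (((q ^ xx - 1)/(q-1) : ℝ) : ℂ)^s
      = ((q-1:ℝ):ℂ)^s * ∑' k : ℕ, (∏ i ∈ Finset.range k, (s + i)) / (Nat.factorial k : ℂ)
        * Complex.exp ((1 - s - k) * ((Real.log q * xx : ℝ) : ℂ)) := by
  have hq0 : (0:ℝ) < q := lt_trans one_pos hq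
  set T : ℝ := Real.log q * xx with hT
  have hT0 : 0 < T := mul_pos (Real.log_pos hq) hxx
  have hA : q ^ xx = Real.exp T := Real.rpow_def_of_pos hq0 xx
  set u : ℝ := Real.exp (-T) with hu
  have hu0 : (0:ℝ) < u := Real.exp_pos _
  have hu1 : u < 1 := Real.exp_lt_one_iff.mpr (by linarith)
  have hAu : Real.exp T * u = 1 := by rw [hu, ← Real.exp_add]; simp
  have hbin := binom s hu0.le hu1
  have hq1 : (0:ℝ) < q - 1 := by linarith
  -- rewrite the base
  have hbase : (q ^ xx - 1)/(q-1) = (Real.exp T * (1-u)) * (q-1)⁻¹ := by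
    rw [hA, div_eq_mul_inv]
    congr 1
    rw [mul_sub, hAu, mul_one]
  rw [hbase, hA]
  have h1u : (0:ℝ) ≤ 1 - u := by linarith
  rw [show (((Real.exp T * (1-u)) * (q-1)⁻¹ : ℝ):ℂ) = (((Real.exp T * (1-u)) : ℝ):ℂ) * (((q-1)⁻¹ : ℝ):ℂ) by push_cast; ring]
  rw [Complex.mul_cpow_ofReal_nonneg (by positivity) (by positivity)]
  rw [show ((Real.exp T * (1-u) : ℝ):ℂ) = ((Real.exp T:ℝ):ℂ) * ((1-u:ℝ):ℂ) by push_cast; ring]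
  rw [Complex.mul_cpow_ofReal_nonneg (Real.exp_pos T).le h1u]
  have harg : (((q-1)⁻¹ : ℝ):ℂ).arg ≠ Real.pi := by
    rw [Complex.arg_ofReal_of_nonneg (by positivity)]
    exact Real.pi_ne_zero.symm
  have hinv : (((q-1)⁻¹ : ℝ):ℂ) ^ s = (((q-1:ℝ):ℂ) ^ s)⁻¹ := by
    rw [Complex.ofReal_inv, Complex.inv_cpow _ _ (by
      rw [Complex.arg_ofReal_of_nonneg hq1.le]; exact Real.pi_ne_zero.symm)]
  rw [hinv]
  have hEs : ((Real.exp T : ℝ):ℂ) ^ s = Complex.exp ((T:ℂ) * s) := by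
    rw [cpow_exp_form (Real.exp_pos T), Real.log_exp]
  have hXs : (((1-u:ℝ)):ℂ) ^ s ≠ 0 := by
    rw [Complex.cpow_def_of_ne_zero (by exact_mod_cast (by linarith : (0:ℝ) < 1 - u).ne')]
    exact Complex.exp_ne_zero _
  have hfact : ((Real.exp T : ℝ):ℂ) / (((Real.exp T:ℝ):ℂ)^s * (((1-u:ℝ)):ℂ)^s * (((q-1:ℝ):ℂ)^s)⁻¹)
      = ((q-1:ℝ):ℂ)^s * ((Complex.exp ((T:ℂ)) * (Complex.exp ((T:ℂ) * s))⁻¹) * ((((1-u:ℝ)):ℂ)^s)⁻¹) := by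
    rw [hEs, ← Complex.ofReal_exp]
    have h1 : Complex.exp ((T:ℂ) * s) ≠ 0 := Complex.exp_ne_zero _
    have h2 : ((q-1:ℝ):ℂ)^s ≠ 0 := by
      rw [Complex.cpow_def_of_ne_zero (by exact_mod_cast hq1.ne')]
      exact Complex.exp_ne_zero _
    field_simp
  rw [hfact]
  congr 1
  have hXinv : ((((1-u:ℝ)):ℂ)^s)⁻¹ = (((1-u:ℝ)):ℂ)^(-s) := (Complex.cpow_neg _ _).symm
  rw [hXinv, ← hbin.tsum_eq, ← tsum_mul_left]
  apply tsum_congr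
  intro k
  have hcu : ((u:ℝ):ℂ) = Complex.exp (-(T:ℂ)) := by
    rw [hu, Complex.ofReal_exp]
    push_cast
    ring_nf
  calc (Complex.exp ((T:ℂ)) * (Complex.exp ((T:ℂ)*s))⁻¹) * ((∏ i ∈ Finset.range k, (s + i)) / (Nat.factorial k : ℂ) * ((u:ℝ):ℂ)^k)
      = (∏ i ∈ Finset.range k, (s + i)) / (Nat.factorial k : ℂ) *
        (Complex.exp ((T:ℂ)) * Complex.exp (-((T:ℂ)*s)) * Complex.exp ((k:ℂ) * -(T:ℂ))) := by
        rw [hcu, ← Complex.exp_nat_mul, ← Complex.exp_neg]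
        ring
    _ = (∏ i ∈ Finset.range k, (s + i)) / (Nat.factorial k : ℂ) * Complex.exp ((1 - s - k) * (T:ℂ)) := by
        rw [← Complex.exp_add, ← Complex.exp_add]
        congr 1
        ring

lemma Qsum (s : ℂ) {r : ℝ} (h0 : 0 < r) (h1 : r < 1) :
    Summable (fun k : ℕ => (∏ i ∈ Finset.range k, (‖s‖+1+i)) / (Nat.factorial k : ℝ) * r^k) := by
  refine Summable.of_nonneg_of_le (fun k => ?_) (fun k => ?_) (maj_summable s h0 h1)
  · have : (0:ℝ) ≤ ∏ i ∈ Finset.range k, (‖s‖+1+i) :=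
      Finset.prod_nonneg (fun i _ => by positivity)
    positivity
  · have hP : (0:ℝ) ≤ ∏ i ∈ Finset.range k, (‖s‖+1+i) :=
      Finset.prod_nonneg (fun i _ => by positivity)
    have h2 : (0:ℝ) ≤ (∏ i ∈ Finset.range k, (‖s‖+1+i)) / (Nat.factorial k : ℝ) * r^k := by
      positivity
    rw [mul_div_assoc]
    nlinarith [h2, Nat.cast_nonneg (α := ℝ) k]

theorem stmt_13 (q x : ℝ) (hq : 1 < q) (hx : 0 < x) (s : ℂ) (hs : 1 < s.re) :
    (∑' n : ℕ, ((q ^ ((n : ℝ) + x) : ℝ) : ℂ) /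
        (((q ^ ((n : ℝ) + x) - 1) / (q - 1) : ℝ) : ℂ) ^ s)
      = (((q - 1 : ℝ)) : ℂ) ^ s *
        ∑' k : ℕ, ((∏ i ∈ Finset.range k, (s + i)) / (Nat.factorial k : ℂ)) *
          (((q : ℝ)) : ℂ) ^ ((s + k - 1) * (1 - (x : ℂ))) /
            (((q : ℝ) : ℂ) ^ (s + k - 1) - 1) := by
  have hq0 : (0:ℝ) < q := lt_trans one_pos hq
  set L : ℝ := Real.log q with hLdef
  have hL0 : 0 < L := Real.log_pos hq
  set σ : ℝ := s.re with hσ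
  set c : ℕ → ℂ := fun k => (∏ i ∈ Finset.range k, (s + i)) / (Nat.factorial k : ℂ) with hc
  set Q : ℕ → ℝ := fun k => (∏ i ∈ Finset.range k, (‖s‖+1+i)) / (Nat.factorial k : ℝ) with hQdef
  have hQ0 : ∀ k, 0 ≤ Q k := by
    intro k
    have : (0:ℝ) ≤ ∏ i ∈ Finset.range k, (‖s‖+1+i) :=
      Finset.prod_nonneg (fun i _ => by positivity)
    positivity
  have hcQ : ∀ k, ‖c k‖ ≤ Q k := fun k => coeff_norm_le s k
  set f : ℕ → ℕ → ℂ := fun n k => c k * Complex.exp ((1 - s - k) * ((L * ((n:ℝ) + x) : ℝ) : ℂ)) with hf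
  have hterm : ∀ n : ℕ, ((q ^ ((n:ℝ)+x) : ℝ) : ℂ) / (((q ^ ((n:ℝ)+x) - 1)/(q-1) : ℝ) : ℂ)^s
      = ((q-1:ℝ):ℂ)^s * ∑' k, f n k := fun n => step1 q ((n:ℝ)+x) hq (by positivity) s
  rw [tsum_congr hterm, tsum_mul_left]
  congr 1
  -- norms
  have hnorm : ∀ n k, ‖f n k‖ = ‖c k‖ * Real.exp ((1 - σ - k) * (L * ((n:ℝ) + x))) := by
    intro n k
    rw [hf]
    simp only [norm_mul, Complex.norm_exp]
    congr 2
    simp [hσ, Complex.mul_re, Complex.sub_re, Complex.one_re, Complex.natCast_re,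
      Complex.ofReal_re, Complex.ofReal_im]
  set u0 : ℝ := Real.exp (-(L * x)) with hu0def
  have hu00 : 0 < u0 := Real.exp_pos _
  have hu01 : u0 < 1 := Real.exp_lt_one_iff.mpr (by nlinarith)
  set w : ℕ → ℝ := fun n => Real.exp ((1-σ) * (L*((n:ℝ)+x))) with hw
  have hw0 : ∀ n, 0 < w n := fun n => Real.exp_pos _
  have hQsum : Summable (fun k => Q k * u0^k) := Qsum s hu00 hu01
  have hwsum : Summable w := by
    have : ∀ n : ℕ, w n = Real.exp ((1-σ)*(L*x)) * (Real.exp ((1-σ)*L))^n := by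
      intro n
      rw [hw]
      simp only
      rw [← Real.exp_nat_mul, ← Real.exp_add]
      congr 1
      ring
    rw [funext this]
    apply Summable.mul_left
    apply summable_geometric_of_lt_one (Real.exp_pos _).le
    rw [Real.exp_lt_one_iff]
    nlinarith
  have hbound : ∀ n k, ‖f n k‖ ≤ (Q k * u0^k) * w n := by
    intro n k
    rw [hnorm]
    have e1 : Real.exp ((1 - σ - k) * (L * ((n:ℝ) + x)))
        = (Real.exp (-(L * ((n:ℝ)+x))))^k * w n := by
      rw [hw]
      simp only
      rw [← Real.exp_nat_mul, ← Real.exp_add]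
      congr 1
      ring
    rw [e1]
    have e2 : Real.exp (-(L * ((n:ℝ)+x))) ≤ u0 := by
      rw [hu0def, Real.exp_le_exp]
      have : (0:ℝ) ≤ (n:ℝ) := Nat.cast_nonneg n
      nlinarith
    have e3 : (Real.exp (-(L * ((n:ℝ)+x))))^k ≤ u0^k :=
      pow_le_pow_left₀ (Real.exp_pos _).le e2 k
    calc ‖c k‖ * ((Real.exp (-(L * ((n:ℝ)+x))))^k * w n)
        ≤ Q k * (u0^k * w n) := by
          apply mul_le_mul (hcQ k) ?_ (by positivity) (hQ0 k)
          exact mul_le_mul_of_nonneg_right e3 (hw0 n).le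
      _ = (Q k * u0^k) * w n := by ring
  have hrow : ∀ n, Summable (fun k => ‖f n k‖) := by
    intro n
    refine Summable.of_nonneg_of_le (fun k => norm_nonneg _) (fun k => hbound n k) ?_
    exact hQsum.mul_right (w n)
  have hrow' : ∀ n, Summable (fun k => f n k) := fun n => Summable.of_norm (hrow n)
  have hsumf : Summable (Function.uncurry f) := by
    apply Summable.of_norm
    rw [summable_prod_of_nonneg (fun p => norm_nonneg _)]
    constructor
    · intro n
      exact hrow n
    · refine Summable.of_nonneg_of_le (fun n => tsum_nonneg (fun k => norm_nonneg _))
        (fun n => ?_) (hwsum.mul_left (∑' k, Q k * u0^k))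
      calc (∑' k, ‖f n k‖) ≤ ∑' k, (Q k * u0^k) * w n :=
            Summable.tsum_le_tsum (fun k => hbound n k) (hrow n) (hQsum.mul_right (w n))
        _ = (∑' k, Q k * u0^k) * w n := by rw [tsum_mul_right]
  have hswap : ∑' n, ∑' k, f n k = ∑' k, ∑' n, f n k := (Summable.tsum_comm hsumf).symm
  rw [hswap]
  apply tsum_congr
  intro k
  -- inner geometric sum
  have hratio_lt : ‖Complex.exp ((1-s-k)*(L:ℂ))‖ < 1 := by
    rw [Complex.norm_exp]
    rw [Real.exp_lt_one_iff]
    have : ((1-s-(k:ℂ))*(L:ℂ)).re = (1 - σ - k) * L := by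
      simp [hσ, Complex.mul_re]
    rw [this]
    have : (0:ℝ) ≤ (k:ℝ) := Nat.cast_nonneg k
    nlinarith
  have hsplit : ∀ n : ℕ, f n k = (c k * Complex.exp ((1-s-k)*(L:ℂ)*(x:ℂ))) * (Complex.exp ((1-s-k)*(L:ℂ)))^n := by
    intro n
    rw [hf]
    simp only
    rw [← Complex.exp_nat_mul, mul_assoc, ← Complex.exp_add]
    congr 2
    push_cast
    ring
  rw [tsum_congr hsplit, tsum_mul_left, tsum_geometric_of_norm_lt_one hratio_lt]
  -- final algebra
  rw [cpow_exp_form hq0, cpow_exp_form hq0]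
  set W : ℂ := Complex.exp ((L:ℂ) * (s+k-1)) with hW
  have hW0 : W ≠ 0 := Complex.exp_ne_zero _
  have hW1 : W ≠ 1 := by
    intro h
    have h2 : ‖W‖ = Real.exp (L * (σ + k - 1)) := by
      rw [hW, Complex.norm_exp]
      congr 1
      simp [hσ, Complex.mul_re, Complex.sub_re, Complex.add_re]
    rw [h] at h2
    simp only [norm_one] at h2
    have hk0 : (0:ℝ) ≤ (k:ℝ) := Nat.cast_nonneg k
    have h3 : 0 < L * (σ + k - 1) := by nlinarith
    have h4 := Real.add_one_le_exp (L * (σ + k - 1))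
    linarith
  have hWm1 : W - 1 ≠ 0 := sub_ne_zero.mpr hW1
  have hexp1 : Complex.exp ((1-s-(k:ℂ))*(L:ℂ)) = W⁻¹ := by
    rw [hW, ← Complex.exp_neg]
    congr 1
    ring
  have h2 : Complex.exp ((L:ℂ) * ((s+(k:ℂ)-1)*(1-(x:ℂ)))) = Complex.exp ((1-s-(k:ℂ))*(L:ℂ)*(x:ℂ)) * W := by
    rw [hW, ← Complex.exp_add]
    congr 1
    ring
  rw [hexp1, h2]
  have hWi : (1:ℂ) - W⁻¹ ≠ 0 := by
    rw [sub_ne_zero]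
    intro h
    apply hW1
    rw [← inv_inv W, ← h, inv_one]
  have hkf : ((Nat.factorial k : ℕ) : ℂ) ≠ 0 := Nat.cast_ne_zero.mpr (Nat.factorial_ne_zero k)
  rw [hc]
  simp only
  field_simp
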